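/- Let n ≥ 2, let v, v' ∈ ℝⁿ be timelike (η(v,v) > 0 and η(v',v') > 0) and linearly independent, and let r, r' ∈ ℝⁿ. Then there exists a unique pair (λ, λ') ∈ ℝ × ℝ such that, setting q := r + λ•v and q' := r' + λ'•v', one has η(q − q', v) = 0 and η(q − q', v') = 0; i.e. on two non-parallel timelike lines there is exactly one pair of points each of which is Einstein-simultaneous with the other relative to the respective line. -/

import Mathlib

noncomputable section

/-- The Minkowski bilinear form on `ℝⁿ`:
`η(v,w) = v₀ w₀ − ∑_{i≠0} vᵢ wᵢ`. -/
def eta {n : ℕ} [NeZero n] (v w : Fin n → ℝ) : ℝ :=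
  v 0 * w 0 - ∑ i ∈ Finset.univ.erase 0, v i * w i

end

lemma eta_comm {n : ℕ} [NeZero n] (v w : Fin n → ℝ) : eta v w = eta w v := by
  simp only [eta, mul_comm]

lemma eta_sub_smul {n : ℕ} [NeZero n] (x y w : Fin n → ℝ) (s : ℝ) :
    eta (x - s • y) w = eta x w - s * eta y w := by
  simp only [eta, Pi.sub_apply, Pi.smul_apply, smul_eq_mul, sub_mul, mul_assoc,
    Finset.sum_sub_distrib, ← Finset.mul_sum]
  ring

lemma eta_expand {n : ℕ} [NeZero n] (r r' v v' w : Fin n → ℝ) (a b : ℝ) :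
    eta ((r + a • v) - (r' + b • v')) w
      = eta r w - eta r' w + a * eta v w - b * eta v' w := by
  simp only [eta, Pi.sub_apply, Pi.add_apply, Pi.smul_apply, smul_eq_mul,
    sub_mul, add_mul, mul_assoc, Finset.sum_sub_distrib, Finset.sum_add_distrib,
    ← Finset.mul_sum]
  ring

lemma eta_ortho_neg {n : ℕ} [NeZero n] (v w : Fin n → ℝ) (hv : 0 < eta v v)
    (hw : eta v w = 0) (hw0 : w ≠ 0) : eta w w < 0 := by
  set S := Finset.univ.erase (0 : Fin n) with hS
  have hCS := Finset.sum_mul_sq_le_sq_mul_sq S v w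
  have evv : ∀ u : Fin n → ℝ, ∑ i ∈ S, u i ^ 2 = ∑ i ∈ S, u i * u i :=
    fun u => Finset.sum_congr rfl fun i _ => pow_two _
  rw [evv, evv] at hCS
  have hA : ∑ i ∈ S, v i * v i < v 0 * v 0 := by
    have := hv; rw [eta, sub_pos] at this; exact this
  have hw' : v 0 * w 0 = ∑ i ∈ S, v i * w i := by
    have := hw; rw [eta, sub_eq_zero] at this; exact this
  have hBnn : (0:ℝ) ≤ ∑ i ∈ S, w i * w i :=
    Finset.sum_nonneg fun i _ => mul_self_nonneg _
  have hAnn : (0:ℝ) ≤ ∑ i ∈ S, v i * v i :=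
    Finset.sum_nonneg fun i _ => mul_self_nonneg _
  rcases eq_or_lt_of_le hBnn with hB | hB
  · exfalso
    have hz : ∀ i ∈ S, w i = 0 := by
      intro i hi
      have := (Finset.sum_eq_zero_iff_of_nonneg
        (fun i _ => mul_self_nonneg (w i))).mp hB.symm i hi
      exact mul_self_eq_zero.mp this
    have hv0 : v 0 ≠ 0 := by nlinarith
    have hw0' : w 0 = 0 := by
      have h0 : ∑ i ∈ S, v i * w i = 0 :=
        Finset.sum_eq_zero fun i hi => by rw [hz i hi]; ring
      exact (mul_eq_zero.mp (hw'.trans h0)).resolve_left hv0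
    apply hw0
    funext i
    by_cases h : i = 0
    · simpa [h] using hw0'
    · exact hz i (Finset.mem_erase.mpr ⟨h, Finset.mem_univ i⟩)
  · rw [eta, sub_neg, ← hS]
    rw [← hw'] at hCS
    have hv0sq : 0 < v 0 * v 0 := lt_of_le_of_lt hAnn hA
    nlinarith [hCS, mul_lt_mul_of_pos_right hA hB, hv0sq]

theorem mutual_einstein_simultaneity {n : ℕ} [NeZero n] (hn : 2 ≤ n)
    (v v' r r' : Fin n → ℝ) (hv : 0 < eta v v) (hv' : 0 < eta v' v')
    (hind : LinearIndependent ℝ ![v, v']) :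
    ∃! ll : ℝ × ℝ,
      eta ((r + ll.1 • v) - (r' + ll.2 • v')) v = 0 ∧
      eta ((r + ll.1 • v) - (r' + ll.2 • v')) v' = 0 := by
  set a := eta v v with ha
  set b := eta v v' with hb
  set c := eta v' v' with hc
  have ha0 : a ≠ 0 := ne_of_gt hv
  -- reversed Cauchy-Schwarz: a*c < b^2
  have hbD : a * c < b ^ 2 := by
    set w := v' - (b / a) • v with hwdef
    have hne : w ≠ 0 := by
      intro h
      have h' : (b / a) • v + (-1 : ℝ) • v' = 0 := by
        rw [sub_eq_zero] at h; simp [← h]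
      have := (LinearIndependent.pair_iff.mp hind) (b / a) (-1) h'
      exact one_ne_zero (neg_eq_zero.mp this.2)
    have horth : eta v w = 0 := by
      rw [eta_comm, hwdef, eta_sub_smul, eta_comm v' v, ← hb, ← ha]
      field_simp; ring
    have hneg := eta_ortho_neg v w hv horth hne
    have hexp : eta w w = c - 2 * (b/a) * b + (b/a)^2 * a := by
      have h1 : eta w w = eta v' w - (b/a) * eta v w := by
        rw [hwdef, eta_sub_smul]
      have h2 : eta v' w = c - (b/a) * b := by
        rw [eta_comm v' w, hwdef, eta_sub_smul, ← hb, ← hc]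
      have h3 : eta v w = b - (b/a) * a := by
        rw [eta_comm v w, hwdef, eta_sub_smul, eta_comm v' v, ← hb, ← ha]
      rw [h1, h2, h3]; ring
    rw [hexp] at hneg
    have e : c - 2 * (b/a) * b + (b/a)^2 * a = c - b^2/a := by field_simp; ring
    rw [e] at hneg
    have : c < b^2/a := by linarith
    calc a * c < a * (b^2/a) := by exact (mul_lt_mul_iff_right₀ hv).mpr this
      _ = b^2 := by field_simp
  have hD : b ^ 2 - a * c ≠ 0 := by nlinarith
  set e1 := eta r v - eta r' v with he1
  set e2 := eta r v' - eta r' v' with he2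
  have hvv' : eta v' v = b := by rw [eta_comm v' v, ← hb]
  have key1 : ∀ l l' : ℝ,
      eta ((r + l • v) - (r' + l' • v')) v = e1 + l * a - l' * b := by
    intro l l'; rw [eta_expand, hvv', ← ha, he1]; try ring
  have key2 : ∀ l l' : ℝ,
      eta ((r + l • v) - (r' + l' • v')) v' = e2 + l * b - l' * c := by
    intro l l'; rw [eta_expand, ← hb, ← hc, he2]; try ring
  refine ⟨⟨(c * e1 - b * e2) / (b^2 - a*c), (b * e1 - a * e2) / (b^2 - a*c)⟩,
    ⟨?_, ?_⟩, ?_⟩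
  · rw [key1]; have := mul_inv_cancel₀ hD; linear_combination (-e1) * this
  · rw [key2]; have := mul_inv_cancel₀ hD; linear_combination (-e2) * this
  · rintro ⟨l, l'⟩ ⟨h1, h2⟩
    rw [key1] at h1
    rw [key2] at h2
    have hl : l * (b^2 - a*c) = c*e1 - b*e2 := by linear_combination (-c)*h1 + b*h2
    have hl' : l' * (b^2 - a*c) = b*e1 - a*e2 := by linear_combination (-b)*h1 + a*h2
    have : l = (c * e1 - b * e2) / (b^2 - a*c) := by
      rw [eq_div_iff hD]; exact hl
    have : l' = (b * e1 - a * e2) / (b^2 - a*c) := by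
      rw [eq_div_iff hD]; exact hl'
    simp_all
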